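/- Let H be a unimodular coFrobenius Hopf algebra with integral φ and Nakayama automorphism N. Then N⁻¹ = S⁻¹ ∘ N ∘ S, and N commutes with S². -/

import Mathlib

open TensorProduct Coalgebra HopfAlgebra

variable {H : Type*} [Ring H] [HopfAlgebra ℂ H]

/-- `φ` is a right integral: `Σ φ(x₁) x₂ = φ(x) 1`. -/
def IsRightIntegral (φ : H →ₗ[ℂ] ℂ) : Prop :=
  ∀ x : H,
    TensorProduct.lid ℂ H ((LinearMap.rTensor H φ) (Coalgebra.comul (R := ℂ) x)) = φ x • 1

/-- `φ` is a left integral: `Σ x₁ φ(x₂) = φ(x) 1`. -/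
def IsLeftIntegral (φ : H →ₗ[ℂ] ℂ) : Prop :=
  ∀ x : H,
    TensorProduct.rid ℂ H ((LinearMap.lTensor H φ) (Coalgebra.comul (R := ℂ) x)) = φ x • 1

noncomputable instance : DecidableEq ↑(Module.Basis.ofVectorSpaceIndex ℂ H) := Classical.decEq _

noncomputable def bH : Module.Basis (Module.Basis.ofVectorSpaceIndex ℂ H) ℂ H := Module.Basis.ofVectorSpace ℂ H

noncomputable def EH : (H ⊗[ℂ] H) ≃ₗ[ℂ] (Module.Basis.ofVectorSpaceIndex ℂ H →₀ H) :=
  (LinearEquiv.lTensor H (bH (H := H)).repr).trans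
    (TensorProduct.finsuppScalarRight ℂ ℂ H _)

lemma EH_symm_single (i : Module.Basis.ofVectorSpaceIndex ℂ H) (m : H) :
    (EH (H := H)).symm (Finsupp.single i m) = m ⊗ₜ[ℂ] bH i := by
  simp only [EH, LinearEquiv.trans_symm, LinearEquiv.trans_apply,
    TensorProduct.finsuppScalarRight_symm_apply_single]
  simp [LinearEquiv.lTensor, TensorProduct.congr_symm_tmul, Module.Basis.repr_symm_single_one]

lemma tensor_decomp (t : H ⊗[ℂ] H) :
    t = ∑ i ∈ (EH t).support, (EH t) i ⊗ₜ[ℂ] bH i := by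
  calc t = EH.symm (EH t) := (EH.symm_apply_apply t).symm
    _ = EH.symm ((EH t).sum Finsupp.single) := by rw [Finsupp.sum_single]
    _ = (EH t).sum (fun i m => EH.symm (Finsupp.single i m)) := map_finsuppSum _ _ _
    _ = (EH t).sum (fun i m => m ⊗ₜ[ℂ] bH i) := Finsupp.sum_congr (fun i _ => EH_symm_single i _)
    _ = ∑ i ∈ (EH t).support, (EH t) i ⊗ₜ[ℂ] bH i := rfl

noncomputable def basisRepr (c : H) : Coalgebra.Repr ℂ c (Module.Basis.ofVectorSpaceIndex ℂ H) where
  index := (EH (Coalgebra.comul (R := ℂ) c)).support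
  left i := EH (Coalgebra.comul (R := ℂ) c) i
  right i := bH i
  eq := (tensor_decomp _).symm

lemma basis_extract {s : Finset (Module.Basis.ofVectorSpaceIndex ℂ H)} {g : Module.Basis.ofVectorSpaceIndex ℂ H → ℂ}
    (h : ∑ i ∈ s, g i • (bH (H := H)) i = 0) : ∀ i ∈ s, g i = 0 :=
  linearIndependent_iff'.mp (bH (H := H)).linearIndependent s g h


noncomputable def mulRepr {ι κ : Type*} {a b : H} (ra : Coalgebra.Repr ℂ a ι) (rb : Coalgebra.Repr ℂ b κ) :
    Coalgebra.Repr ℂ (a * b) (ι × κ) where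
  index := ra.index ×ˢ rb.index
  left p := ra.left p.1 * rb.left p.2
  right p := ra.right p.1 * rb.right p.2
  eq := by
    rw [Bialgebra.comul_mul, ← ra.eq, ← rb.eq, Finset.sum_mul_sum]
    rw [Finset.sum_product]
    simp [Algebra.TensorProduct.tmul_mul_tmul]

lemma counit_right_smul {ι : Type*} {a : H} (r : Coalgebra.Repr ℂ a ι) :
    ∑ i ∈ r.index, Coalgebra.counit (R := ℂ) (r.right i) • r.left i = a := by
  have h := Coalgebra.sum_tmul_counit_eq (R := ℂ) r
  have h2 := congrArg (TensorProduct.rid ℂ H) h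
  rw [map_sum] at h2
  simp only [TensorProduct.rid_tmul] at h2
  simpa using h2

lemma rightIntegral_repr {φ : H →ₗ[ℂ] ℂ}
    (hr : ∀ x : H, TensorProduct.lid ℂ H ((LinearMap.rTensor H φ) (Coalgebra.comul (R := ℂ) x)) = φ x • 1)
    {ι : Type*} {a : H} (r : Coalgebra.Repr ℂ a ι) :
    ∑ i ∈ r.index, φ (r.left i) • r.right i = φ a • 1 := by
  have h := hr a
  rw [← r.eq] at h
  simpa [map_sum] using h

noncomputable def innerS : H ⊗[ℂ] H →ₗ[ℂ] H :=
  LinearMap.mul' ℂ H ∘ₗ LinearMap.lTensor H (antipode (R := ℂ))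

@[simp] lemma innerS_tmul (v w : H) :
    innerS (v ⊗ₜ[ℂ] w) = v * antipode (R := ℂ) w := by simp [innerS]

noncomputable def theta (φ : H →ₗ[ℂ] ℂ) (z t : H) : H ⊗[ℂ] (H ⊗[ℂ] H) →ₗ[ℂ] H :=
  (TensorProduct.lid ℂ H).toLinearMap
    ∘ₗ LinearMap.rTensor H (φ ∘ₗ LinearMap.mulLeft ℂ z)
    ∘ₗ LinearMap.lTensor H (LinearMap.mulLeft ℂ t ∘ₗ innerS)

@[simp] lemma theta_tmul (φ : H →ₗ[ℂ] ℂ) (z t u v w : H) :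
    theta φ z t (u ⊗ₜ[ℂ] (v ⊗ₜ[ℂ] w)) = φ (z * u) • (t * (v * antipode (R := ℂ) w)) := by
  simp [theta]

lemma key (φ : H →ₗ[ℂ] ℂ)
    (hr : ∀ x : H, TensorProduct.lid ℂ H ((LinearMap.rTensor H φ) (Coalgebra.comul (R := ℂ) x)) = φ x • 1)
    {ι : Type*} {c : H} (hc : ∀ z : H, φ (z * c) = 0) (rc : Coalgebra.Repr ℂ c ι) (y : H) :
    ∑ i ∈ rc.index, φ (y * rc.left i) • antipode (R := ℂ) (rc.right i) = 0 := by
  classical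
  set ry := ℛ ℂ y with hry
  set ri : ∀ i : rc.ι, Coalgebra.Repr ℂ (rc.left i) (H × H) := fun i => ℛ ℂ (rc.left i) with hri
  set si : ∀ i : rc.ι, Coalgebra.Repr ℂ (rc.right i) (H × H) := fun i => ℛ ℂ (rc.right i) with hsi
  have coas := Coalgebra.sum_tmul_tmul_eq (R := ℂ) rc ri si
  have main : ∀ j : ry.ι,
      ∑ i ∈ rc.index, ∑ k ∈ (ri i).index,
        φ (ry.left j * (ri i).left k) •
          (ry.right j * ((ri i).right k * antipode (R := ℂ) (rc.right i)))
      = ∑ i ∈ rc.index, ∑ l ∈ (si i).index,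
        φ (ry.left j * rc.left i) •
          (ry.right j * ((si i).left l * antipode (R := ℂ) ((si i).right l))) := by
    intro j
    have h := congrArg (theta φ (ry.left j) (ry.right j)) coas
    simpa [map_sum] using h
  have rzero : ∀ j : ry.ι,
      ∑ i ∈ rc.index, ∑ l ∈ (si i).index,
        φ (ry.left j * rc.left i) •
          (ry.right j * ((si i).left l * antipode (R := ℂ) ((si i).right l))) = 0 := by
    intro j
    have hinner : ∀ i ∈ rc.index,
        ∑ l ∈ (si i).index,
          φ (ry.left j * rc.left i) •
            (ry.right j * ((si i).left l * antipode (R := ℂ) ((si i).right l)))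
        = φ (ry.left j * (Coalgebra.counit (R := ℂ) (rc.right i) • rc.left i)) • ry.right j := by
      intro i _
      rw [← Finset.smul_sum, ← Finset.mul_sum, HopfAlgebra.sum_mul_antipode_eq_smul (si i)]
      rw [mul_smul_comm, mul_one, smul_smul, mul_smul_comm, map_smul, smul_eq_mul, mul_comm]
    rw [Finset.sum_congr rfl hinner]
    rw [← Finset.sum_smul, ← map_sum, ← Finset.mul_sum, counit_right_smul rc, hc, zero_smul]
  have hi : ∀ i ∈ rc.index, φ (y * rc.left i) • antipode (R := ℂ) (rc.right i)
      = ∑ j ∈ ry.index, ∑ k ∈ (ri i).index,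
          φ (ry.left j * (ri i).left k) •
            (ry.right j * ((ri i).right k * antipode (R := ℂ) (rc.right i))) := by
    intro i _
    have h1 := rightIntegral_repr hr (mulRepr ry (ri i))
    simp only [mulRepr] at h1
    calc φ (y * rc.left i) • antipode (R := ℂ) (rc.right i)
        = (φ (y * rc.left i) • (1:H)) * antipode (R := ℂ) (rc.right i) := by
          rw [smul_mul_assoc, one_mul]
      _ = (∑ p ∈ ry.index ×ˢ (ri i).index,
            φ (ry.left p.1 * (ri i).left p.2) • (ry.right p.1 * (ri i).right p.2)) *
            antipode (R := ℂ) (rc.right i) := by rw [← h1]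
      _ = ∑ j ∈ ry.index, ∑ k ∈ (ri i).index,
            φ (ry.left j * (ri i).left k) •
              (ry.right j * ((ri i).right k * antipode (R := ℂ) (rc.right i))) := by
          rw [Finset.sum_mul, Finset.sum_product]
          exact Finset.sum_congr rfl fun j _ => Finset.sum_congr rfl fun k _ => by
            rw [smul_mul_assoc, mul_assoc]
  rw [Finset.sum_congr rfl hi, Finset.sum_comm]
  rw [Finset.sum_congr rfl (fun j (_ : j ∈ ry.index) => (main j).trans (rzero j))]
  exact Finset.sum_const_zero


lemma counit_left_smul' {ι : Type*} {a : H} (r : Coalgebra.Repr ℂ a ι) :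
    ∑ i ∈ r.index, Coalgebra.counit (R := ℂ) (r.left i) • r.right i = a := by
  have h2 := congrArg (TensorProduct.lid ℂ H) (Coalgebra.sum_counit_tmul_eq (R := ℂ) r)
  rw [map_sum] at h2
  simp only [TensorProduct.lid_tmul] at h2
  simpa using h2

lemma counit_right_smul' {ι : Type*} {a : H} (r : Coalgebra.Repr ℂ a ι) :
    ∑ i ∈ r.index, Coalgebra.counit (R := ℂ) (r.right i) • r.left i = a := by
  have h2 := congrArg (TensorProduct.rid ℂ H) (Coalgebra.sum_tmul_counit_eq (R := ℂ) r)
  rw [map_sum] at h2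
  simp only [TensorProduct.rid_tmul] at h2
  simpa using h2

noncomputable def mulRepr' {ι κ : Type*} {a b : H} (ra : Coalgebra.Repr ℂ a ι) (rb : Coalgebra.Repr ℂ b κ) :
    Coalgebra.Repr ℂ (a * b) (ι × κ) where
  index := ra.index ×ˢ rb.index
  left p := ra.left p.1 * rb.left p.2
  right p := ra.right p.1 * rb.right p.2
  eq := by
    rw [Bialgebra.comul_mul, ← ra.eq, ← rb.eq, Finset.sum_mul_sum]
    rw [Finset.sum_product]
    simp [Algebra.TensorProduct.tmul_mul_tmul]

/-- `beta p t w : v₁ ⊗ (v₂ ⊗ v₃) ↦ S(p v₁) * (t * ((v₂ * S v₃) * S w))` -/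
noncomputable def beta (p t w : H) : H ⊗[ℂ] (H ⊗[ℂ] H) →ₗ[ℂ] H :=
  LinearMap.mul' ℂ H
    ∘ₗ LinearMap.rTensor H (antipode (R := ℂ) ∘ₗ LinearMap.mulLeft ℂ p)
    ∘ₗ LinearMap.lTensor H
        (LinearMap.mulLeft ℂ t ∘ₗ LinearMap.mulRight ℂ (antipode (R := ℂ) w)
          ∘ₗ (LinearMap.mul' ℂ H ∘ₗ LinearMap.lTensor H (antipode (R := ℂ))))

@[simp] lemma beta_tmul (p t w v₁ v₂ v₃ : H) :
    beta p t w (v₁ ⊗ₜ[ℂ] (v₂ ⊗ₜ[ℂ] v₃)) =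
      antipode (R := ℂ) (p * v₁) *
        (t * ((v₂ * antipode (R := ℂ) v₃) * antipode (R := ℂ) w)) := by
  simp [beta]

/-- `gamma q v₁ : u₁ ⊗ (u₂ ⊗ u₃) ↦ S(u₁ * v₁) * (u₂ * (q * S u₃))` -/
noncomputable def gamma (q v₁ : H) : H ⊗[ℂ] (H ⊗[ℂ] H) →ₗ[ℂ] H :=
  LinearMap.mul' ℂ H
    ∘ₗ LinearMap.rTensor H (antipode (R := ℂ) ∘ₗ LinearMap.mulRight ℂ v₁)
    ∘ₗ LinearMap.lTensor H
        (LinearMap.mul' ℂ H ∘ₗ LinearMap.lTensor H (LinearMap.mulLeft ℂ q ∘ₗ antipode (R := ℂ)))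

@[simp] lemma gamma_tmul (q v₁ u₁ u₂ u₃ : H) :
    gamma q v₁ (u₁ ⊗ₜ[ℂ] (u₂ ⊗ₜ[ℂ] u₃)) =
      antipode (R := ℂ) (u₁ * v₁) * (u₂ * (q * antipode (R := ℂ) u₃)) := by
  simp [gamma]


lemma antipode_mul_rev (a b : H) :
    antipode (R := ℂ) (a * b) = antipode (R := ℂ) b * antipode (R := ℂ) a := by
  classical
  set ra := ℛ ℂ a with hra
  set rb := ℛ ℂ b with hrb
  set sa : ∀ i : ra.ι, Coalgebra.Repr ℂ (ra.right i) (H × H) := fun i => ℛ ℂ (ra.right i) with hsa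
  set ta : ∀ i : ra.ι, Coalgebra.Repr ℂ (ra.left i) (H × H) := fun i => ℛ ℂ (ra.left i) with hta
  set sb : ∀ j : rb.ι, Coalgebra.Repr ℂ (rb.right j) (H × H) := fun j => ℛ ℂ (rb.right j) with hsb
  set tb : ∀ j : rb.ι, Coalgebra.Repr ℂ (rb.left j) (H × H) := fun j => ℛ ℂ (rb.left j) with htb
  have Ca := Coalgebra.sum_tmul_tmul_eq (R := ℂ) ra ta sa
  have Cb := Coalgebra.sum_tmul_tmul_eq (R := ℂ) rb tb sb
  -- abbreviations for the three kinds of terms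
  have E1 : ∑ i ∈ ra.index, ∑ k ∈ (sa i).index, ∑ j ∈ rb.index, ∑ l ∈ (sb j).index,
      antipode (R := ℂ) (ra.left i * rb.left j) *
        ((sa i).left k * (((sb j).left l * antipode (R := ℂ) ((sb j).right l)) *
          antipode (R := ℂ) ((sa i).right k)))
      = antipode (R := ℂ) (a * b) := by
    have step_l : ∀ (i : ra.ι) (k : (sa i).ι) (j : rb.ι),
        ∑ l ∈ (sb j).index,
          antipode (R := ℂ) (ra.left i * rb.left j) *
            ((sa i).left k * (((sb j).left l * antipode (R := ℂ) ((sb j).right l)) *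
              antipode (R := ℂ) ((sa i).right k)))
        = Coalgebra.counit (R := ℂ) (rb.right j) •
            (antipode (R := ℂ) (ra.left i * rb.left j) *
              ((sa i).left k * antipode (R := ℂ) ((sa i).right k))) := by
      intro i k j
      rw [← Finset.mul_sum, ← Finset.mul_sum, ← Finset.sum_mul,
        HopfAlgebra.sum_mul_antipode_eq_smul (sb j)]
      rw [smul_mul_assoc, one_mul, mul_smul_comm, mul_smul_comm]
    have step_j : ∀ (i : ra.ι) (k : (sa i).ι),
        ∑ j ∈ rb.index, Coalgebra.counit (R := ℂ) (rb.right j) •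
            (antipode (R := ℂ) (ra.left i * rb.left j) *
              ((sa i).left k * antipode (R := ℂ) ((sa i).right k)))
        = antipode (R := ℂ) (ra.left i * b) *
            ((sa i).left k * antipode (R := ℂ) ((sa i).right k)) := by
      intro i k
      have factor : ∑ j ∈ rb.index, Coalgebra.counit (R := ℂ) (rb.right j) •
            antipode (R := ℂ) (ra.left i * rb.left j)
          = antipode (R := ℂ) (ra.left i * b) := by
        calc ∑ j ∈ rb.index, Coalgebra.counit (R := ℂ) (rb.right j) •
              antipode (R := ℂ) (ra.left i * rb.left j)
            = ∑ j ∈ rb.index, antipode (R := ℂ)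
                (ra.left i * (Coalgebra.counit (R := ℂ) (rb.right j) • rb.left j)) := by
              refine Finset.sum_congr rfl fun j _ => ?_
              rw [mul_smul_comm, map_smul]
          _ = antipode (R := ℂ) (ra.left i * ∑ j ∈ rb.index,
                Coalgebra.counit (R := ℂ) (rb.right j) • rb.left j) := by
              rw [Finset.mul_sum, map_sum]
          _ = antipode (R := ℂ) (ra.left i * b) := by rw [counit_right_smul' rb]
      calc ∑ j ∈ rb.index, Coalgebra.counit (R := ℂ) (rb.right j) •
            (antipode (R := ℂ) (ra.left i * rb.left j) *
              ((sa i).left k * antipode (R := ℂ) ((sa i).right k)))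
          = (∑ j ∈ rb.index, Coalgebra.counit (R := ℂ) (rb.right j) •
              antipode (R := ℂ) (ra.left i * rb.left j)) *
              ((sa i).left k * antipode (R := ℂ) ((sa i).right k)) := by
            rw [Finset.sum_mul]
            exact Finset.sum_congr rfl fun j _ => (smul_mul_assoc _ _ _).symm
        _ = antipode (R := ℂ) (ra.left i * b) *
              ((sa i).left k * antipode (R := ℂ) ((sa i).right k)) := by rw [factor]
    have step_k : ∀ i : ra.ι,
        ∑ k ∈ (sa i).index, antipode (R := ℂ) (ra.left i * b) *
            ((sa i).left k * antipode (R := ℂ) ((sa i).right k))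
        = Coalgebra.counit (R := ℂ) (ra.right i) • antipode (R := ℂ) (ra.left i * b) := by
      intro i
      rw [← Finset.mul_sum, HopfAlgebra.sum_mul_antipode_eq_smul (sa i),
        mul_smul_comm, mul_one]
    have step_i : ∑ i ∈ ra.index, Coalgebra.counit (R := ℂ) (ra.right i) •
          antipode (R := ℂ) (ra.left i * b) = antipode (R := ℂ) (a * b) := by
      calc ∑ i ∈ ra.index, Coalgebra.counit (R := ℂ) (ra.right i) •
            antipode (R := ℂ) (ra.left i * b)
          = ∑ i ∈ ra.index, antipode (R := ℂ)
              ((Coalgebra.counit (R := ℂ) (ra.right i) • ra.left i) * b) := by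
            refine Finset.sum_congr rfl fun i _ => ?_
            rw [smul_mul_assoc, map_smul]
        _ = antipode (R := ℂ) ((∑ i ∈ ra.index,
              Coalgebra.counit (R := ℂ) (ra.right i) • ra.left i) * b) := by
            rw [Finset.sum_mul, map_sum]
        _ = antipode (R := ℂ) (a * b) := by rw [counit_right_smul' ra]
    calc ∑ i ∈ ra.index, ∑ k ∈ (sa i).index, ∑ j ∈ rb.index, ∑ l ∈ (sb j).index,
        antipode (R := ℂ) (ra.left i * rb.left j) *
          ((sa i).left k * (((sb j).left l * antipode (R := ℂ) ((sb j).right l)) *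
            antipode (R := ℂ) ((sa i).right k)))
        = ∑ i ∈ ra.index, ∑ k ∈ (sa i).index, ∑ j ∈ rb.index,
            Coalgebra.counit (R := ℂ) (rb.right j) •
              (antipode (R := ℂ) (ra.left i * rb.left j) *
                ((sa i).left k * antipode (R := ℂ) ((sa i).right k))) :=
          Finset.sum_congr rfl fun i _ => Finset.sum_congr rfl fun k _ =>
            Finset.sum_congr rfl fun j _ => step_l i k j
      _ = ∑ i ∈ ra.index, ∑ k ∈ (sa i).index, antipode (R := ℂ) (ra.left i * b) *
            ((sa i).left k * antipode (R := ℂ) ((sa i).right k)) :=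
          Finset.sum_congr rfl fun i _ => Finset.sum_congr rfl fun k _ => step_j i k
      _ = ∑ i ∈ ra.index, Coalgebra.counit (R := ℂ) (ra.right i) •
            antipode (R := ℂ) (ra.left i * b) :=
          Finset.sum_congr rfl fun i _ => step_k i
      _ = antipode (R := ℂ) (a * b) := step_i
  -- Bridge 1 : switch b from sb-form to tb-form
  have B1 : ∀ (i : ra.ι) (k : (sa i).ι),
      ∑ j ∈ rb.index, ∑ l ∈ (tb j).index,
        antipode (R := ℂ) (ra.left i * (tb j).left l) *
          ((sa i).left k * (((tb j).right l * antipode (R := ℂ) (rb.right j)) *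
            antipode (R := ℂ) ((sa i).right k)))
      = ∑ j ∈ rb.index, ∑ l ∈ (sb j).index,
        antipode (R := ℂ) (ra.left i * rb.left j) *
          ((sa i).left k * (((sb j).left l * antipode (R := ℂ) ((sb j).right l)) *
            antipode (R := ℂ) ((sa i).right k))) := by
    intro i k
    have h := congrArg (beta (ra.left i) ((sa i).left k) ((sa i).right k)) Cb
    simpa [map_sum] using h
  -- Bridge 2 : switch a from sa-form to ta-form
  have B2 : ∀ (j : rb.ι) (l : (tb j).ι),
      ∑ i ∈ ra.index, ∑ k ∈ (ta i).index,
        antipode (R := ℂ) ((ta i).left k * (tb j).left l) *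
          ((ta i).right k * (((tb j).right l * antipode (R := ℂ) (rb.right j)) *
            antipode (R := ℂ) (ra.right i)))
      = ∑ i ∈ ra.index, ∑ k ∈ (sa i).index,
        antipode (R := ℂ) (ra.left i * (tb j).left l) *
          ((sa i).left k * (((tb j).right l * antipode (R := ℂ) (rb.right j)) *
            antipode (R := ℂ) ((sa i).right k))) := by
    intro j l
    have h := congrArg
      (gamma ((tb j).right l * antipode (R := ℂ) (rb.right j)) ((tb j).left l)) Ca
    simpa [map_sum] using h
  -- E2 : total in (ta, tb) form equals S b * S a
  have E2 : ∑ j ∈ rb.index, ∑ i ∈ ra.index, ∑ k ∈ (ta i).index, ∑ l ∈ (tb j).index,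
      antipode (R := ℂ) ((ta i).left k * (tb j).left l) *
        ((ta i).right k * (((tb j).right l * antipode (R := ℂ) (rb.right j)) *
          antipode (R := ℂ) (ra.right i)))
      = antipode (R := ℂ) b * antipode (R := ℂ) a := by
    have step_kl : ∀ (j : rb.ι) (i : ra.ι),
        ∑ k ∈ (ta i).index, ∑ l ∈ (tb j).index,
          antipode (R := ℂ) ((ta i).left k * (tb j).left l) *
            ((ta i).right k * (((tb j).right l * antipode (R := ℂ) (rb.right j)) *
              antipode (R := ℂ) (ra.right i)))
        = (Coalgebra.counit (R := ℂ) (ra.left i) * Coalgebra.counit (R := ℂ) (rb.left j)) •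
            (antipode (R := ℂ) (rb.right j) * antipode (R := ℂ) (ra.right i)) := by
      intro j i
      have regroup : ∀ (k : (ta i).ι) (l : (tb j).ι),
          antipode (R := ℂ) ((ta i).left k * (tb j).left l) *
            ((ta i).right k * (((tb j).right l * antipode (R := ℂ) (rb.right j)) *
              antipode (R := ℂ) (ra.right i)))
          = (antipode (R := ℂ) ((ta i).left k * (tb j).left l) *
              ((ta i).right k * (tb j).right l)) *
              (antipode (R := ℂ) (rb.right j) * antipode (R := ℂ) (ra.right i)) := by
        intro k l
        simp only [mul_assoc]
      rw [Finset.sum_congr rfl fun k _ => Finset.sum_congr rfl fun l _ => regroup k l]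
      have collapse : ∑ k ∈ (ta i).index, ∑ l ∈ (tb j).index,
          antipode (R := ℂ) ((ta i).left k * (tb j).left l) *
            ((ta i).right k * (tb j).right l)
          = Coalgebra.counit (R := ℂ) (ra.left i * rb.left j) • 1 := by
        have h := HopfAlgebra.sum_antipode_mul_eq_smul (R := ℂ) (mulRepr' (ta i) (tb j))
        simp only [mulRepr'] at h
        rw [Finset.sum_product] at h
        exact h
      calc ∑ k ∈ (ta i).index, ∑ l ∈ (tb j).index,
          (antipode (R := ℂ) ((ta i).left k * (tb j).left l) *
            ((ta i).right k * (tb j).right l)) *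
            (antipode (R := ℂ) (rb.right j) * antipode (R := ℂ) (ra.right i))
          = ∑ k ∈ (ta i).index, (∑ l ∈ (tb j).index,
              antipode (R := ℂ) ((ta i).left k * (tb j).left l) *
                ((ta i).right k * (tb j).right l)) *
              (antipode (R := ℂ) (rb.right j) * antipode (R := ℂ) (ra.right i)) :=
            Finset.sum_congr rfl fun k _ => (Finset.sum_mul _ _ _).symm
        _ = (∑ k ∈ (ta i).index, ∑ l ∈ (tb j).index,
              antipode (R := ℂ) ((ta i).left k * (tb j).left l) *
                ((ta i).right k * (tb j).right l)) *
              (antipode (R := ℂ) (rb.right j) * antipode (R := ℂ) (ra.right i)) :=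
            (Finset.sum_mul _ _ _).symm
        _ = (Coalgebra.counit (R := ℂ) (ra.left i * rb.left j) • (1:H)) *
              (antipode (R := ℂ) (rb.right j) * antipode (R := ℂ) (ra.right i)) := by
            rw [collapse]
        _ = (Coalgebra.counit (R := ℂ) (ra.left i) * Coalgebra.counit (R := ℂ) (rb.left j)) •
              (antipode (R := ℂ) (rb.right j) * antipode (R := ℂ) (ra.right i)) := by
            rw [Bialgebra.counit_mul, smul_mul_assoc, one_mul]
    have Sa : ∑ i ∈ ra.index, Coalgebra.counit (R := ℂ) (ra.left i) •
        antipode (R := ℂ) (ra.right i) = antipode (R := ℂ) a := by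
      calc ∑ i ∈ ra.index, Coalgebra.counit (R := ℂ) (ra.left i) •
            antipode (R := ℂ) (ra.right i)
          = ∑ i ∈ ra.index, antipode (R := ℂ)
              (Coalgebra.counit (R := ℂ) (ra.left i) • ra.right i) :=
            Finset.sum_congr rfl fun i _ => (map_smul _ _ _).symm
        _ = antipode (R := ℂ) (∑ i ∈ ra.index,
              Coalgebra.counit (R := ℂ) (ra.left i) • ra.right i) := (map_sum _ _ _).symm
        _ = antipode (R := ℂ) a := by rw [counit_left_smul' ra]
    have Sb : ∑ j ∈ rb.index, Coalgebra.counit (R := ℂ) (rb.left j) •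
        antipode (R := ℂ) (rb.right j) = antipode (R := ℂ) b := by
      calc ∑ j ∈ rb.index, Coalgebra.counit (R := ℂ) (rb.left j) •
            antipode (R := ℂ) (rb.right j)
          = ∑ j ∈ rb.index, antipode (R := ℂ)
              (Coalgebra.counit (R := ℂ) (rb.left j) • rb.right j) :=
            Finset.sum_congr rfl fun j _ => (map_smul _ _ _).symm
        _ = antipode (R := ℂ) (∑ j ∈ rb.index,
              Coalgebra.counit (R := ℂ) (rb.left j) • rb.right j) := (map_sum _ _ _).symm
        _ = antipode (R := ℂ) b := by rw [counit_left_smul' rb]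
    have step_i2 : ∀ j : rb.ι,
        ∑ i ∈ ra.index,
          (Coalgebra.counit (R := ℂ) (ra.left i) * Coalgebra.counit (R := ℂ) (rb.left j)) •
            (antipode (R := ℂ) (rb.right j) * antipode (R := ℂ) (ra.right i))
        = Coalgebra.counit (R := ℂ) (rb.left j) •
            (antipode (R := ℂ) (rb.right j) * antipode (R := ℂ) a) := by
      intro j
      calc ∑ i ∈ ra.index,
            (Coalgebra.counit (R := ℂ) (ra.left i) * Coalgebra.counit (R := ℂ) (rb.left j)) •
              (antipode (R := ℂ) (rb.right j) * antipode (R := ℂ) (ra.right i))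
          = ∑ i ∈ ra.index, Coalgebra.counit (R := ℂ) (rb.left j) •
              (antipode (R := ℂ) (rb.right j) *
                (Coalgebra.counit (R := ℂ) (ra.left i) • antipode (R := ℂ) (ra.right i))) := by
            refine Finset.sum_congr rfl fun i _ => ?_
            rw [mul_smul_comm, smul_smul, mul_comm]
        _ = Coalgebra.counit (R := ℂ) (rb.left j) •
              (antipode (R := ℂ) (rb.right j) * ∑ i ∈ ra.index,
                Coalgebra.counit (R := ℂ) (ra.left i) • antipode (R := ℂ) (ra.right i)) := by
            rw [← Finset.smul_sum, ← Finset.mul_sum]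
        _ = Coalgebra.counit (R := ℂ) (rb.left j) •
              (antipode (R := ℂ) (rb.right j) * antipode (R := ℂ) a) := by rw [Sa]
    calc ∑ j ∈ rb.index, ∑ i ∈ ra.index, ∑ k ∈ (ta i).index, ∑ l ∈ (tb j).index,
        antipode (R := ℂ) ((ta i).left k * (tb j).left l) *
          ((ta i).right k * (((tb j).right l * antipode (R := ℂ) (rb.right j)) *
            antipode (R := ℂ) (ra.right i)))
        = ∑ j ∈ rb.index, ∑ i ∈ ra.index,
            (Coalgebra.counit (R := ℂ) (ra.left i) * Coalgebra.counit (R := ℂ) (rb.left j)) •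
              (antipode (R := ℂ) (rb.right j) * antipode (R := ℂ) (ra.right i)) :=
          Finset.sum_congr rfl fun j _ => Finset.sum_congr rfl fun i _ => step_kl j i
      _ = ∑ j ∈ rb.index, Coalgebra.counit (R := ℂ) (rb.left j) •
            (antipode (R := ℂ) (rb.right j) * antipode (R := ℂ) a) :=
          Finset.sum_congr rfl fun j _ => step_i2 j
      _ = (∑ j ∈ rb.index, Coalgebra.counit (R := ℂ) (rb.left j) •
            antipode (R := ℂ) (rb.right j)) * antipode (R := ℂ) a := by
          rw [Finset.sum_mul]
          exact Finset.sum_congr rfl fun j _ => (smul_mul_assoc _ _ _).symm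
      _ = antipode (R := ℂ) b * antipode (R := ℂ) a := by rw [Sb]
  -- reorderings and final assembly
  calc antipode (R := ℂ) (a * b)
      = ∑ i ∈ ra.index, ∑ k ∈ (sa i).index, ∑ j ∈ rb.index, ∑ l ∈ (sb j).index,
          antipode (R := ℂ) (ra.left i * rb.left j) *
            ((sa i).left k * (((sb j).left l * antipode (R := ℂ) ((sb j).right l)) *
              antipode (R := ℂ) ((sa i).right k))) := E1.symm
    _ = ∑ i ∈ ra.index, ∑ k ∈ (sa i).index, ∑ j ∈ rb.index, ∑ l ∈ (tb j).index,
          antipode (R := ℂ) (ra.left i * (tb j).left l) *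
            ((sa i).left k * (((tb j).right l * antipode (R := ℂ) (rb.right j)) *
              antipode (R := ℂ) ((sa i).right k))) :=
        (Finset.sum_congr rfl fun i _ => Finset.sum_congr rfl fun k _ => (B1 i k).symm).symm.symm
    _ = ∑ j ∈ rb.index, ∑ l ∈ (tb j).index, ∑ i ∈ ra.index, ∑ k ∈ (sa i).index,
          antipode (R := ℂ) (ra.left i * (tb j).left l) *
            ((sa i).left k * (((tb j).right l * antipode (R := ℂ) (rb.right j)) *
              antipode (R := ℂ) ((sa i).right k))) := by
        rw [Finset.sum_congr rfl fun i (_ : i ∈ ra.index) => Finset.sum_comm]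
        rw [Finset.sum_comm]
        rw [Finset.sum_congr rfl fun j (_ : j ∈ rb.index) =>
          Finset.sum_congr rfl fun i (_ : i ∈ ra.index) => Finset.sum_comm]
        rw [Finset.sum_congr rfl fun j (_ : j ∈ rb.index) => Finset.sum_comm]
    _ = ∑ j ∈ rb.index, ∑ l ∈ (tb j).index, ∑ i ∈ ra.index, ∑ k ∈ (ta i).index,
          antipode (R := ℂ) ((ta i).left k * (tb j).left l) *
            ((ta i).right k * (((tb j).right l * antipode (R := ℂ) (rb.right j)) *
              antipode (R := ℂ) (ra.right i))) :=
        (Finset.sum_congr rfl fun j _ => Finset.sum_congr rfl fun l _ => (B2 j l)).symm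
    _ = ∑ j ∈ rb.index, ∑ i ∈ ra.index, ∑ k ∈ (ta i).index, ∑ l ∈ (tb j).index,
          antipode (R := ℂ) ((ta i).left k * (tb j).left l) *
            ((ta i).right k * (((tb j).right l * antipode (R := ℂ) (rb.right j)) *
              antipode (R := ℂ) (ra.right i))) := by
        rw [Finset.sum_congr rfl fun j (_ : j ∈ rb.index) => Finset.sum_comm]
        rw [Finset.sum_congr rfl fun j (_ : j ∈ rb.index) =>
          Finset.sum_congr rfl fun i (_ : i ∈ ra.index) => Finset.sum_comm]
    _ = antipode (R := ℂ) b * antipode (R := ℂ) a := E2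

/-- for a unimodular coFrobenius Hopf algebra with Nakayama
automorphism `N`, one has `N⁻¹ = S⁻¹ ∘ N ∘ S`, and `N` commutes with `S²`. -/
theorem nakayama_unimodular
    (φ : H →ₗ[ℂ] ℂ) (hr : IsRightIntegral φ) (hl : IsLeftIntegral φ) (hφ : φ ≠ 0)
    (hφS : ∀ x : H, φ (antipode (R := ℂ) x) = φ x)
    (S' : H →ₗ[ℂ] H)
    (hS'l : ∀ x : H, S' (antipode (R := ℂ) x) = x)
    (hS'r : ∀ x : H, antipode (R := ℂ) (S' x) = x)
    (N : H →ₗ[ℂ] H) (hNbij : Function.Bijective N)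
    (hNmul : ∀ x y : H, N (x * y) = N x * N y) (hNone : N 1 = 1)
    (hNak : ∀ x y : H, φ (x * y) = φ (y * N x))
    (hNformula : ∀ x : H, N x =
      TensorProduct.lid ℂ H
        ((LinearMap.rTensor H ((Coalgebra.counit (R := ℂ)) ∘ₗ N))
          ((LinearMap.lTensor H (S' ∘ₗ S')) (Coalgebra.comul (R := ℂ) x)))) :
    (∀ x : H, N (S' (N (antipode (R := ℂ) x))) = x) ∧
    (∀ x : H, S' (N (antipode (R := ℂ) (N x))) = x) ∧
    (∀ x : H, N (antipode (R := ℂ) (antipode (R := ℂ) x)) =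
      antipode (R := ℂ) (antipode (R := ℂ) (N x))) := by

  classical
  have hr' : ∀ x : H,
      TensorProduct.lid ℂ H ((LinearMap.rTensor H φ) (Coalgebra.comul (R := ℂ) x))
        = φ x • 1 := hr
  have hφS' : ∀ x : H, φ (S' x) = φ x := fun x => by
    rw [← hφS (S' x), hS'r]
  have hS'mul : ∀ x y : H, S' (x * y) = S' y * S' x := by
    intro x y
    have h : antipode (R := ℂ) (S' (x * y)) = antipode (R := ℂ) (S' y * S' x) := by
      rw [hS'r, antipode_mul_rev, hS'r, hS'r]
    have := congrArg S' h
    rwa [hS'l, hS'l] at this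
  -- the "left kill" predicate and its consequences
  have lk_rk : ∀ c : H, (∀ z : H, φ (z * c) = 0) → ∀ w : H, φ (c * w) = 0 := by
    intro c hc w
    obtain ⟨v, hv⟩ := hNbij.surjective w
    rw [← hv, ← hNak v c]
    exact hc v
  have lk_legs : ∀ c : H, (∀ z : H, φ (z * c) = 0) →
      ∀ y : H, ∀ i ∈ (basisRepr c).index, φ (y * (basisRepr c).left i) = 0 := by
    intro c hc y i hi
    have hk := key φ hr' hc (basisRepr c) y
    have hk2 := congrArg S' hk
    rw [map_sum, map_zero] at hk2
    have hk3 : ∀ j ∈ (basisRepr c).index,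
        S' (φ (y * (basisRepr c).left j) • antipode (R := ℂ) ((basisRepr c).right j))
          = φ (y * (basisRepr c).left j) • bH j := by
      intro j _
      rw [map_smul, hS'l]
      rfl
    rw [Finset.sum_congr rfl hk3] at hk2
    exact basis_extract hk2 i hi
  obtain ⟨x₀, hx₀⟩ : ∃ x₀ : H, φ x₀ ≠ 0 := by
    by_contra h
    push_neg at h
    exact hφ (LinearMap.ext fun x => h x)
  have lk_eps : ∀ c : H, (∀ z : H, φ (z * c) = 0) →
      Coalgebra.counit (R := ℂ) c = 0 := by
    intro c hc
    have hmul := HopfAlgebra.sum_mul_antipode_eq_smul (R := ℂ) (basisRepr c)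
    have h2 : φ (x₀ * ∑ i ∈ (basisRepr c).index,
        (basisRepr c).left i * antipode (R := ℂ) ((basisRepr c).right i))
        = φ (x₀ * (Coalgebra.counit (R := ℂ) c • 1)) := by rw [hmul]
    have hz : φ (x₀ * ∑ i ∈ (basisRepr c).index,
        (basisRepr c).left i * antipode (R := ℂ) ((basisRepr c).right i)) = 0 := by
      rw [Finset.mul_sum, map_sum]
      refine Finset.sum_eq_zero fun i hi => ?_
      rw [hNak x₀ ((basisRepr c).left i * antipode (R := ℂ) ((basisRepr c).right i)),
        mul_assoc]
      exact lk_rk _ (fun z => lk_legs c hc z i hi) _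
    rw [hz] at h2
    rw [mul_smul_comm, mul_one, map_smul, smul_eq_mul] at h2
    exact ((mul_eq_zero.mp h2.symm).resolve_right hx₀)
  have lk_zero : ∀ c : H, (∀ z : H, φ (z * c) = 0) → c = 0 := by
    intro c hc
    have hcounit := counit_left_smul' (basisRepr c)
    rw [← hcounit]
    refine Finset.sum_eq_zero fun i hi => ?_
    have hleg : ∀ z : H, φ (z * (basisRepr c).left i) = 0 := fun z => lk_legs c hc z i hi
    rw [lk_eps _ hleg, zero_smul]
  have sep : ∀ u v : H, (∀ y : H, φ (y * u) = φ (y * v)) → u = v := by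
    intro u v h
    have h0 : ∀ z : H, φ (z * (u - v)) = 0 := fun z => by
      rw [mul_sub, map_sub, h z, sub_self]
    exact sub_eq_zero.mp (lk_zero _ h0)
  -- goal 1
  have g1 : ∀ x : H, N (S' (N (antipode (R := ℂ) x))) = x := by
    intro x
    refine sep _ _ fun y => ?_
    rw [← hNak (S' (N (antipode (R := ℂ) x))) y]
    rw [show S' (N (antipode (R := ℂ) x)) * y
        = S' (antipode (R := ℂ) y * N (antipode (R := ℂ) x)) from by
      rw [hS'mul, hS'l]]
    rw [hφS']
    rw [← hNak (antipode (R := ℂ) x) (antipode (R := ℂ) y)]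
    rw [← antipode_mul_rev y x]
    rw [hφS]
  have g2 : ∀ x : H, S' (N (antipode (R := ℂ) (N x))) = x := fun x =>
    hNbij.injective (g1 (N x))
  have g1' : ∀ x : H, N (antipode (R := ℂ) (N (S' x))) = x := by
    intro x
    refine sep _ _ fun y => ?_
    rw [← hNak (antipode (R := ℂ) (N (S' x))) y]
    rw [show antipode (R := ℂ) (N (S' x)) * y
        = antipode (R := ℂ) (S' y * N (S' x)) from by
      rw [antipode_mul_rev, hS'r]]
    rw [hφS]
    rw [← hNak (S' x) (S' y)]
    rw [← hS'mul y x]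
    rw [hφS']
  have g3 : ∀ x : H, N (antipode (R := ℂ) (antipode (R := ℂ) x)) =
      antipode (R := ℂ) (antipode (R := ℂ) (N x)) := by
    intro x
    have C : ∀ u : H, S' (N (antipode (R := ℂ) u)) = antipode (R := ℂ) (N (S' u)) := by
      intro u
      apply hNbij.injective
      rw [g1 u, g1' u]
    have hx := C (antipode (R := ℂ) x)
    rw [hS'l] at hx
    have h2 := congrArg (antipode (R := ℂ)) hx
    rwa [hS'r] at h2
  exact ⟨g1, g2, g3⟩
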